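/- For n ≥ 4, 1 ≤ i ≤ ⌊(n-1)/2⌋ and r, s ≥ 0, one has g^r ∘ x_i ∘ g^s = x_i (as partial bijections) if and only if r ≡ 0 and s ≡ 0 modulo n; in particular, for 0 ≤ r, s ≤ n-1, g^r x_i g^s = x_i iff r = s = 0. -/

import Mathlib

/-- Powers in the symmetric inverse monoid (left-to-right composition). -/
def dPow (f : PartialEquiv ℕ ℕ) : ℕ → PartialEquiv ℕ ℕ
  | 0 => PartialEquiv.refl ℕ
  | k + 1 => (dPow f k).trans f

/-- The partial identity `e_j` on `{1,…,n} \ {j}`. -/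
def dE (n j : ℕ) : PartialEquiv ℕ ℕ := PartialEquiv.ofSet (Set.Icc 1 n \ {j})

/-- The `n`-cycle `g : i ↦ i+1 (mod n)` on `{1,…,n}`. -/
def dCyc (n : ℕ) : PartialEquiv ℕ ℕ where
  toFun k := if k = n then 1 else k + 1
  invFun k := if k = 1 then n else k - 1
  source := Set.Icc 1 n
  target := Set.Icc 1 n
  map_source' := by
    intro k hk
    simp only [Set.mem_Icc] at *
    split_ifs <;> omega
  map_target' := by
    intro k hk
    simp only [Set.mem_Icc] at *
    split_ifs <;> omega
  left_inv' := by
    intro k hk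
    simp only [Set.mem_Icc] at hk
    (try dsimp only)
    split_ifs <;> omega
  right_inv' := by
    intro k hk
    simp only [Set.mem_Icc] at hk
    (try dsimp only)
    split_ifs <;> omega

/-- The reversal `h : k ↦ n+1-k` on `{1,…,n}`. -/
def dRev (n : ℕ) : PartialEquiv ℕ ℕ where
  toFun k := n + 1 - k
  invFun k := n + 1 - k
  source := Set.Icc 1 n
  target := Set.Icc 1 n
  map_source' := by
    intro k hk; simp only [Set.mem_Icc] at *; omega
  map_target' := by
    intro k hk; simp only [Set.mem_Icc] at *; omega
  left_inv' := by
    intro k hk; simp only [Set.mem_Icc] at hk; (try dsimp only); omega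
  right_inv' := by
    intro k hk; simp only [Set.mem_Icc] at hk; (try dsimp only); omega

/-- The partial shift `x : j ↦ j+1` with domain `{1,…,n-1}`. -/
def dShift (n : ℕ) : PartialEquiv ℕ ℕ where
  toFun k := k + 1
  invFun k := k - 1
  source := Set.Icc 1 (n - 1)
  target := Set.Icc 2 n
  map_source' := by
    intro k hk; simp only [Set.mem_Icc] at *; omega
  map_target' := by
    intro k hk; simp only [Set.mem_Icc] at *; omega
  left_inv' := by
    intro k hk; simp only [Set.mem_Icc] at hk; (try dsimp only); omega
  right_inv' := by
    intro k hk; simp only [Set.mem_Icc] at hk; (try dsimp only); omega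

/-- The rank-2 partial bijection `x_i` with domain `{1, 1+i}`, sending
`1 ↦ 1` and `1+i ↦ n-i+1`. -/
def dXi (n i : ℕ) (h1 : 1 ≤ i) (h2 : i < n) : PartialEquiv ℕ ℕ where
  toFun k := if k = 1 then 1 else n - i + 1
  invFun k := if k = 1 then 1 else 1 + i
  source := {1, 1 + i}
  target := {1, n - i + 1}
  map_source' := by
    intro k _
    (try dsimp only)
    split_ifs <;> simp
  map_target' := by
    intro k _
    (try dsimp only)
    split_ifs <;> simp
  left_inv' := by
    intro k hk
    simp only [Set.mem_insert_iff, Set.mem_singleton_iff] at hk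
    rcases hk with rfl | rfl <;> ((try dsimp only); split_ifs <;> omega)
  right_inv' := by
    intro k hk
    simp only [Set.mem_insert_iff, Set.mem_singleton_iff] at hk
    rcases hk with rfl | rfl <;> ((try dsimp only); split_ifs <;> omega)

lemma cycPow_coe (n : ℕ) (hn : 2 ≤ n) (r : ℕ) : ∀ k, 1 ≤ k → k ≤ n →
    (dPow (dCyc n) r) k = (k - 1 + r) % n + 1 := by
  induction r with
  | zero =>
    intro k hk1 hk2
    simp only [dPow, PartialEquiv.refl_coe, id]
    rw [Nat.add_zero, Nat.mod_eq_of_lt (by omega)]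
    omega
  | succ r ih =>
    intro k hk1 hk2
    have h := ih k hk1 hk2
    show ((dPow (dCyc n) r).trans (dCyc n)) k = _
    rw [PartialEquiv.coe_trans, Function.comp_apply, h]
    have hm : (k - 1 + r) % n < n := Nat.mod_lt _ (by omega)
    show (if (k-1+r) % n + 1 = n then 1 else (k-1+r) % n + 1 + 1) = (k-1+(r+1)) % n + 1
    have he : k - 1 + (r+1) = (k-1+r) + 1 := by omega
    rw [he, Nat.add_mod (k-1+r) 1 n, Nat.mod_eq_of_lt (show 1 < n by omega)]
    split_ifs with h'
    · rw [show (k-1+r) % n + 1 = n from h', Nat.mod_self]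
    · rw [Nat.mod_eq_of_lt (show (k-1+r) % n + 1 < n by omega)]

lemma cycPow_source (n : ℕ) (hn : 2 ≤ n) (r : ℕ) (hr : 1 ≤ r) :
    (dPow (dCyc n) r).source = Set.Icc 1 n := by
  induction r with
  | zero => omega
  | succ r ih =>
    rcases Nat.eq_zero_or_pos r with rfl | hrpos
    · show ((PartialEquiv.refl ℕ).trans (dCyc n)).source = _
      simp [PartialEquiv.trans_source, dCyc]
    · show ((dPow (dCyc n) r).trans (dCyc n)).source = _
      rw [PartialEquiv.trans_source, ih hrpos]
      have hsub : Set.Icc 1 n ⊆ (dPow (dCyc n) r) ⁻¹' (dCyc n).source := by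
        intro k hk
        simp only [Set.mem_Icc] at hk
        have hc := cycPow_coe n hn r k hk.1 hk.2
        have hm : (k-1+r) % n < n := Nat.mod_lt _ (by omega)
        simp only [Set.mem_preimage, hc]
        show (k-1+r) % n + 1 ∈ Set.Icc 1 n
        simp only [Set.mem_Icc]
        omega
      rw [Set.inter_eq_left.mpr hsub]

lemma cycPow_source_mem (n : ℕ) (hn : 2 ≤ n) (s k : ℕ) (hk1 : 1 ≤ k) (hk2 : k ≤ n) :
    k ∈ (dPow (dCyc n) s).source := by
  cases s with
  | zero => simp [dPow]
  | succ s =>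
    rw [cycPow_source n hn _ (by omega)]
    simp only [Set.mem_Icc]
    omega

/-- For `n ≥ 4`, `1 ≤ i ≤ ⌊(n-1)/2⌋` and `r, s ≥ 0`:
`g^r x_i g^s = x_i` iff `r ≡ 0` and `s ≡ 0 (mod n)`; in particular for
`0 ≤ r, s ≤ n-1`, `g^r x_i g^s = x_i` iff `r = s = 0`. -/
theorem stmt8 (n i r s : ℕ) (hn : 4 ≤ n) (h1 : 1 ≤ i) (h2 : i ≤ (n - 1) / 2) :
    (((dPow (dCyc n) r).trans (dXi n i h1 (by omega))).trans (dPow (dCyc n) s)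
        ≈ dXi n i h1 (by omega) ↔ r % n = 0 ∧ s % n = 0) ∧
    (r ≤ n - 1 → s ≤ n - 1 →
      ((((dPow (dCyc n) r).trans (dXi n i h1 (by omega))).trans (dPow (dCyc n) s)
        ≈ dXi n i h1 (by omega)) ↔ (r = 0 ∧ s = 0))) := by
  have hn2 : 2 ≤ n := by omega
  have hi : 2 * i < n := by omega
  set x : PartialEquiv ℕ ℕ := dXi n i h1 (by omega) with hxdef
  set Pr : PartialEquiv ℕ ℕ := dPow (dCyc n) r with hPrdef
  set Ps : PartialEquiv ℕ ℕ := dPow (dCyc n) s with hPsdef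
  have hxsrc : x.source = ({1, 1 + i} : Set ℕ) := rfl
  have hxcoe : ∀ k, x k = if k = 1 then 1 else n - i + 1 := fun _ => rfl
  -- membership characterization of the source of the composite
  have hmem : ∀ k, k ∈ ((Pr.trans x).trans Ps).source ↔
      1 ≤ k ∧ k ≤ n ∧ ((k - 1 + r) % n = 0 ∨ (k - 1 + r) % n = i) := by
    intro k
    simp only [PartialEquiv.trans_source, Set.mem_inter_iff, Set.mem_preimage,
      PartialEquiv.coe_trans, Function.comp_apply]
    constructor
    · rintro ⟨⟨hk1, hk2⟩, -⟩
      rcases Nat.eq_zero_or_pos r with rfl | hrpos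
      · -- r = 0 : Pr is the identity on univ
        have hPrk : Pr k = k := rfl
        rw [hPrk, hxsrc] at hk2
        simp only [Set.mem_insert_iff, Set.mem_singleton_iff] at hk2
        have hkn : k ≤ n := by rcases hk2 with rfl | rfl <;> omega
        have hk1' : 1 ≤ k := by rcases hk2 with rfl | rfl <;> omega
        refine ⟨hk1', hkn, ?_⟩
        rw [Nat.add_zero, Nat.mod_eq_of_lt (by omega)]
        omega
      · rw [hPrdef, cycPow_source n hn2 r hrpos] at hk1
        simp only [Set.mem_Icc] at hk1
        have hc := cycPow_coe n hn2 r k hk1.1 hk1.2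
        rw [hPrdef] at *
        rw [hc, hxsrc] at hk2
        simp only [Set.mem_insert_iff, Set.mem_singleton_iff] at hk2
        exact ⟨hk1.1, hk1.2, by omega⟩
    · rintro ⟨hk1, hk2, hk3⟩
      have hc := cycPow_coe n hn2 r k hk1 hk2
      have hPrk : Pr k ∈ x.source := by
        rw [hPrdef, hc, hxsrc]
        simp only [Set.mem_insert_iff, Set.mem_singleton_iff]
        omega
      refine ⟨⟨?_, hPrk⟩, ?_⟩
      · exact cycPow_source_mem n hn2 r k hk1 hk2
      · rw [hxcoe]
        split_ifs
        · exact cycPow_source_mem n hn2 s 1 (by omega) (by omega)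
        · exact cycPow_source_mem n hn2 s (n - i + 1) (by omega) (by omega)
  have main : (Pr.trans x).trans Ps ≈ x ↔ r % n = 0 ∧ s % n = 0 := by
    constructor
    · rintro ⟨hsrc, heq⟩
      have hmem1 : (1 : ℕ) ∈ ((Pr.trans x).trans Ps).source := by
        rw [hsrc, hxsrc]; simp
      have hmem2 : (1 + i : ℕ) ∈ ((Pr.trans x).trans Ps).source := by
        rw [hsrc, hxsrc]; simp
      have hmem1' := (hmem 1).mp hmem1
      have hmem2' := (hmem (1 + i)).mp hmem2
      have hr1 : r % n = 0 ∨ r % n = i := by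
        have := hmem1'.2.2
        simpa using this
      have hr0 : r % n = 0 := by
        rcases hr1 with h | h
        · exact h
        · exfalso
          have h2i := hmem2'.2.2
          have heq2 : (1 + i - 1 + r) % n = (i % n + r % n) % n := by
            rw [show 1 + i - 1 = i by omega, Nat.add_mod]
          rw [heq2, h, Nat.mod_eq_of_lt (show i < n by omega),
            Nat.mod_eq_of_lt (show i + i < n by omega)] at h2i
          omega
      refine ⟨hr0, ?_⟩
      have ht := heq hmem1
      have hPr1 : Pr 1 = 1 := by
        rw [hPrdef, cycPow_coe n hn2 r 1 (by omega) (by omega)]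
        simp [hr0]
      have hPs1 : Ps 1 = s % n + 1 := by
        rw [hPsdef, cycPow_coe n hn2 s 1 (by omega) (by omega)]
        norm_num
      simp only [PartialEquiv.coe_trans, Function.comp_apply, hPr1] at ht
      rw [hxcoe 1, if_pos rfl, hPs1] at ht
      omega
    · rintro ⟨hr0, hs0⟩
      have hmod : ∀ m, m < n → (m + r) % n = m := by
        intro m hm
        rw [Nat.add_mod, hr0, Nat.add_zero, Nat.mod_mod_of_dvd _ dvd_rfl,
          Nat.mod_eq_of_lt hm]
      have hmods : ∀ m, m < n → (m + s) % n = m := by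
        intro m hm
        rw [Nat.add_mod, hs0, Nat.add_zero, Nat.mod_mod_of_dvd _ dvd_rfl,
          Nat.mod_eq_of_lt hm]
      have hsrc : ((Pr.trans x).trans Ps).source = x.source := by
        ext k
        rw [hmem k, hxsrc]
        simp only [Set.mem_insert_iff, Set.mem_singleton_iff]
        constructor
        · rintro ⟨hk1, hk2, hk3⟩
          rw [hmod (k - 1) (by omega)] at hk3
          omega
        · rintro (rfl | rfl)
          · refine ⟨by omega, by omega, ?_⟩
            rw [hmod 0 (by omega)]; omega
          · refine ⟨by omega, by omega, ?_⟩
            rw [show 1 + i - 1 = i by omega, hmod i (by omega)]; omega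
      refine ⟨hsrc, ?_⟩
      intro k hk
      rw [hsrc, hxsrc] at hk
      simp only [Set.mem_insert_iff, Set.mem_singleton_iff] at hk
      simp only [PartialEquiv.coe_trans, Function.comp_apply]
      rcases hk with rfl | rfl
      · have hPr1 : Pr 1 = 1 := by
          rw [hPrdef, cycPow_coe n hn2 r 1 (by omega) (by omega)]
          rw [show (1 : ℕ) - 1 + r = 0 + r by omega, hmod 0 (by omega)]
        have hPs1 : Ps 1 = 1 := by
          rw [hPsdef, cycPow_coe n hn2 s 1 (by omega) (by omega)]
          rw [show (1 : ℕ) - 1 + s = 0 + s by omega, hmods 0 (by omega)]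
        rw [hPr1, hxcoe 1, if_pos rfl]
        exact hPs1
      · have hPr2 : Pr (1 + i) = 1 + i := by
          rw [hPrdef, cycPow_coe n hn2 r (1 + i) (by omega) (by omega)]
          rw [show 1 + i - 1 + r = i + r by omega, hmod i (by omega)]
          omega
        have hPs2 : Ps (n - i + 1) = n - i + 1 := by
          rw [hPsdef, cycPow_coe n hn2 s (n - i + 1) (by omega) (by omega)]
          rw [show n - i + 1 - 1 + s = (n - i) + s by omega, hmods (n - i) (by omega)]
        rw [hPr2, hxcoe (1 + i), if_neg (by omega)]
        exact hPs2
  refine ⟨main, fun hr hs => ?_⟩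
  rw [main, Nat.mod_eq_of_lt (by omega : r < n), Nat.mod_eq_of_lt (by omega : s < n)]
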